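/- arXiv:1608.08520 — 4 statements merged into one kernel-verified Lean document; each statement's English description precedes it below -/
import Mathlib

section
/- For each t ∈ ℕ, let P_t = {(x,y) ∈ ℝ² : |2x + (2t−2)y| ≤ t²−2t+2 and |(2−2t)x + 2y| ≤ t²−2t+2}. Then |P_t ∩ ℤ²| = t²−2t+2 if t is odd and t²−2t+5 if t is even. -/
private lemma my_ediv_eq {N q r : ℤ} (hN : N ≠ 0) (hr : 0 ≤ r) (hrN : r < N) :
    (N * q + r) / N = q := by
  rw [show N * q + r = r + q * N by ring, Int.add_mul_ediv_right _ _ hN,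
    Int.ediv_eq_zero_of_lt hr hrN, zero_add]

private lemma no_mult {M k a : ℤ} (hM : 0 < M) (h : a = M * k) (h1 : 1 ≤ a) (h2 : a ≤ M - 1) :
    False := by
  rcases le_or_gt k 0 with hk | hk
  · nlinarith
  · nlinarith

private lemma count_odd_t (u : ℤ) (d : ℤ) (hu : u = 2 * d + 1) :
    (Nat.card {p : ℤ × ℤ //
        |2 * p.1 + (2 * u - 2) * p.2| ≤ u ^ 2 - 2 * u + 2 ∧
        |(2 - 2 * u) * p.1 + 2 * p.2| ≤ u ^ 2 - 2 * u + 2} : ℤ) = u ^ 2 - 2 * u + 2 := by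
  subst hu
  have hN : (0:ℤ) < 4 * d ^ 2 + 1 := by positivity
  set g : ℤ → ℤ × ℤ := fun v =>
    ((2 * d ^ 2 - 2 * d * v) / (4 * d ^ 2 + 1),
      v + 2 * d * ((2 * d ^ 2 - 2 * d * v) / (4 * d ^ 2 + 1))) with hg
  set F : Finset (ℤ × ℤ) := (Finset.Icc (-(2 * d ^ 2)) (2 * d ^ 2)).image g with hF
  have hset : {p : ℤ × ℤ |
      |2 * p.1 + (2 * (2 * d + 1) - 2) * p.2| ≤ (2 * d + 1) ^ 2 - 2 * (2 * d + 1) + 2 ∧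
      |(2 - 2 * (2 * d + 1)) * p.1 + 2 * p.2| ≤ (2 * d + 1) ^ 2 - 2 * (2 * d + 1) + 2}
      = ↑F := by
    ext ⟨x, y⟩
    simp only [Set.mem_setOf_eq, hF, Finset.coe_image, Set.mem_image, Finset.mem_coe,
      Finset.mem_Icc, hg]
    constructor
    · rintro ⟨h1, h2⟩
      have key : ∀ w m : ℤ, |2 * w| ≤ 2 * m + 1 → |w| ≤ m := by
        intro w m h
        rw [abs_le] at h ⊢
        omega
      have hu : |x + 2 * d * y| ≤ 2 * d ^ 2 := by
        refine key _ _ ?_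
        rw [show 2 * (x + 2 * d * y) = 2 * x + (2 * (2 * d + 1) - 2) * y by ring]
        have : (2:ℤ) * (2 * d ^ 2) + 1 = (2 * d + 1) ^ 2 - 2 * (2 * d + 1) + 2 := by ring
        rw [this]; exact h1
      have hv : |y - 2 * d * x| ≤ 2 * d ^ 2 := by
        refine key _ _ ?_
        rw [show 2 * (y - 2 * d * x) = (2 - 2 * (2 * d + 1)) * x + 2 * y by ring]
        have : (2:ℤ) * (2 * d ^ 2) + 1 = (2 * d + 1) ^ 2 - 2 * (2 * d + 1) + 2 := by ring
        rw [this]; exact h2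
      obtain ⟨hu1, hu2⟩ := abs_le.mp hu
      obtain ⟨hv1, hv2⟩ := abs_le.mp hv
      refine ⟨y - 2 * d * x, ⟨by linarith, by linarith⟩, ?_⟩
      have hx : (2 * d ^ 2 - 2 * d * (y - 2 * d * x)) / (4 * d ^ 2 + 1) = x := by
        rw [show 2 * d ^ 2 - 2 * d * (y - 2 * d * x)
            = (4 * d ^ 2 + 1) * x + (2 * d ^ 2 - (x + 2 * d * y)) by ring]
        exact my_ediv_eq hN.ne' (by linarith) (by linarith)
      rw [hx]
      exact Prod.ext rfl (by ring)
    · rintro ⟨v, ⟨hv1, hv2⟩, hgv⟩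
      simp only [Prod.mk.injEq] at hgv
      obtain ⟨hgx, hgy⟩ := hgv
      subst hgx; subst hgy
      have h0 := Int.mul_ediv_add_emod (2 * d ^ 2 - 2 * d * v) (4 * d ^ 2 + 1)
      have hr1 := Int.emod_nonneg (2 * d ^ 2 - 2 * d * v) hN.ne'
      have hr2 := Int.emod_lt_of_pos (2 * d ^ 2 - 2 * d * v) hN
      constructor
      · rw [abs_le]; constructor <;> nlinarith [h0, hr1, hr2]
      · rw [abs_le]; constructor <;> nlinarith [h0, hr1, hr2]
  have hcard : Nat.card {p : ℤ × ℤ //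
      |2 * p.1 + (2 * (2 * d + 1) - 2) * p.2| ≤ (2 * d + 1) ^ 2 - 2 * (2 * d + 1) + 2 ∧
      |(2 - 2 * (2 * d + 1)) * p.1 + 2 * p.2| ≤ (2 * d + 1) ^ 2 - 2 * (2 * d + 1) + 2}
      = F.card := by
    calc Nat.card {p : ℤ × ℤ |
        |2 * p.1 + (2 * (2 * d + 1) - 2) * p.2| ≤ (2 * d + 1) ^ 2 - 2 * (2 * d + 1) + 2 ∧
        |(2 - 2 * (2 * d + 1)) * p.1 + 2 * p.2| ≤ (2 * d + 1) ^ 2 - 2 * (2 * d + 1) + 2}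
        = ({p : ℤ × ℤ |
        |2 * p.1 + (2 * (2 * d + 1) - 2) * p.2| ≤ (2 * d + 1) ^ 2 - 2 * (2 * d + 1) + 2 ∧
        |(2 - 2 * (2 * d + 1)) * p.1 + 2 * p.2| ≤ (2 * d + 1) ^ 2 - 2 * (2 * d + 1) + 2} :
          Set (ℤ × ℤ)).ncard := Nat.card_coe_set_eq _
      _ = (↑F : Set (ℤ × ℤ)).ncard := by rw [hset]
      _ = F.card := Set.ncard_coe_finset F
  rw [hcard]
  have hinj : Set.InjOn g ↑(Finset.Icc (-(2 * d ^ 2)) (2 * d ^ 2)) := by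
    intro a _ b _ hab
    have h1 := congrArg Prod.fst hab
    have h2 := congrArg Prod.snd hab
    simp only [hg] at h1 h2
    rw [h1] at h2
    linarith
  rw [hF, Finset.card_image_of_injOn hinj]
  rw [Int.card_Icc]
  rw [Int.toNat_of_nonneg (by linarith [sq_nonneg d])]
  ring

private lemma k_range {M k a : ℤ} (hM : 0 < M) (h : a = M * k) (h1 : -M ≤ a) (h2 : a ≤ 0) :
    k = 0 ∨ k = -1 := by
  have hk1 : k ≤ 0 := by nlinarith
  have hk2 : -1 ≤ k := by nlinarith
  omega

private lemma count_even_t (u : ℤ) (c : ℤ) (hu : u = 2 * c + 2) :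
    (Nat.card {p : ℤ × ℤ //
        |2 * p.1 + (2 * u - 2) * p.2| ≤ u ^ 2 - 2 * u + 2 ∧
        |(2 - 2 * u) * p.1 + 2 * p.2| ≤ u ^ 2 - 2 * u + 2} : ℤ) = u ^ 2 - 2 * u + 5 := by
  subst hu
  have hN : (0:ℤ) < 4 * c ^ 2 + 4 * c + 2 := by nlinarith [sq_nonneg (2 * c + 1)]
  have hm0 : (0:ℤ) ≤ 2 * c ^ 2 + 2 * c := by
    rcases le_or_gt 0 c with h | h <;> nlinarith
  set g : ℤ → ℤ × ℤ := fun v =>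
    ((2 * c ^ 2 + 2 * c - (2 * c + 1) * v) / (4 * c ^ 2 + 4 * c + 2),
      v + (2 * c + 1) * ((2 * c ^ 2 + 2 * c - (2 * c + 1) * v) / (4 * c ^ 2 + 4 * c + 2)))
    with hg
  set C : Finset (ℤ × ℤ) := {(-c, c + 1), (c, -(c + 1)), (c + 1, c), (-(c + 1), -c)} with hC
  set F : Finset (ℤ × ℤ) :=
    ((Finset.Icc (-(2 * c ^ 2 + 2 * c)) (2 * c ^ 2 + 2 * c)).image g) ∪ C with hF
  have hset : {p : ℤ × ℤ |
      |2 * p.1 + (2 * (2 * c + 2) - 2) * p.2| ≤ (2 * c + 2) ^ 2 - 2 * (2 * c + 2) + 2 ∧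
      |(2 - 2 * (2 * c + 2)) * p.1 + 2 * p.2| ≤ (2 * c + 2) ^ 2 - 2 * (2 * c + 2) + 2}
      = ↑F := by
    ext ⟨x, y⟩
    simp only [Set.mem_setOf_eq, hF, hC, Finset.coe_union, Set.mem_union, Finset.coe_image,
      Set.mem_image, Finset.mem_coe, Finset.mem_Icc, Finset.coe_insert, Set.mem_insert_iff,
      Finset.coe_singleton, Set.mem_singleton_iff, Prod.mk.injEq, hg]
    constructor
    · rintro ⟨h1, h2⟩
      obtain ⟨h11, h12⟩ := abs_le.mp h1
      obtain ⟨h21, h22⟩ := abs_le.mp h2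
      have hu1 : -(2 * c ^ 2 + 2 * c + 1) ≤ x + (2 * c + 1) * y := by linarith
      have hu2 : x + (2 * c + 1) * y ≤ 2 * c ^ 2 + 2 * c + 1 := by linarith
      have hv1 : -(2 * c ^ 2 + 2 * c + 1) ≤ y - (2 * c + 1) * x := by linarith
      have hv2 : y - (2 * c + 1) * x ≤ 2 * c ^ 2 + 2 * c + 1 := by linarith
      by_cases hcm : y - (2 * c + 1) * x = 2 * c ^ 2 + 2 * c + 1
      · -- v = m : corner points (-c, c+1) or (-(c+1), -c)
        right
        have hkey : x + (2 * c + 1) * y - (2 * c ^ 2 + 2 * c + 1)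
            = (4 * c ^ 2 + 4 * c + 2) * (x + c) := by
          linear_combination (2 * c + 1) * hcm
        rcases k_range hN hkey (by linarith) (by linarith) with h | h
        · exact Or.inl ⟨by linarith, by linear_combination hcm + (2 * c + 1) * h⟩
        · exact Or.inr (Or.inr (Or.inr
            ⟨by linarith, by linear_combination hcm + (2 * c + 1) * h⟩))
      · by_cases hcm' : y - (2 * c + 1) * x = -(2 * c ^ 2 + 2 * c + 1)
        · -- v = -m : corner points (c, -(c+1)) or (c+1, c)
          right
          have hkey : -(x + (2 * c + 1) * y + (2 * c ^ 2 + 2 * c + 1))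
              = (4 * c ^ 2 + 4 * c + 2) * (-(x - c)) := by
            linear_combination (-(2 * c + 1)) * hcm'
          rcases k_range hN hkey (by linarith) (by linarith) with h | h
          · exact Or.inr (Or.inl
              ⟨by linarith, by linear_combination hcm' + (2 * c + 1) * (neg_eq_zero.mp h)⟩)
          · have h' : x - c = 1 := by linarith [h]
            exact Or.inr (Or.inr (Or.inl
              ⟨by linarith, by linear_combination hcm' + (2 * c + 1) * h'⟩))
        · -- |v| ≤ m - 1
          left
          have hvm1 : y - (2 * c + 1) * x ≤ 2 * c ^ 2 + 2 * c := by
            rcases lt_or_eq_of_le hv2 with h | h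
            · have := Int.lt_iff_add_one_le.mp h; linarith
            · exact absurd h hcm
          have hvm2 : -(2 * c ^ 2 + 2 * c) ≤ y - (2 * c + 1) * x := by
            rcases lt_or_eq_of_le hv1 with h | h
            · have := Int.lt_iff_add_one_le.mp h; linarith
            · exact absurd h.symm hcm'
          have hum : x + (2 * c + 1) * y ≠ 2 * c ^ 2 + 2 * c + 1 := by
            intro h
            have hdvd : (y - (2 * c + 1) * x) + (2 * c ^ 2 + 2 * c + 1)
                = (4 * c ^ 2 + 4 * c + 2) * (y - c) := by
              linear_combination (-(2 * c + 1)) * h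
            exact no_mult hN hdvd (by linarith) (by linarith)
          have hum' : x + (2 * c + 1) * y ≠ -(2 * c ^ 2 + 2 * c + 1) := by
            intro h
            have hdvd : (2 * c ^ 2 + 2 * c + 1) - (y - (2 * c + 1) * x)
                = (4 * c ^ 2 + 4 * c + 2) * (-(y + c)) := by
              linear_combination (2 * c + 1) * h
            exact no_mult hN hdvd (by linarith) (by linarith)
          have huu1 : x + (2 * c + 1) * y ≤ 2 * c ^ 2 + 2 * c := by
            rcases lt_or_eq_of_le hu2 with h | h
            · have := Int.lt_iff_add_one_le.mp h; linarith
            · exact absurd h hum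
          have huu2 : -(2 * c ^ 2 + 2 * c) ≤ x + (2 * c + 1) * y := by
            rcases lt_or_eq_of_le hu1 with h | h
            · have := Int.lt_iff_add_one_le.mp h; linarith
            · exact absurd h.symm hum'
          refine ⟨y - (2 * c + 1) * x, ⟨hvm2, hvm1⟩, ?_⟩
          have hx : (2 * c ^ 2 + 2 * c - (2 * c + 1) * (y - (2 * c + 1) * x))
              / (4 * c ^ 2 + 4 * c + 2) = x := by
            rw [show 2 * c ^ 2 + 2 * c - (2 * c + 1) * (y - (2 * c + 1) * x)
                = (4 * c ^ 2 + 4 * c + 2) * x + (2 * c ^ 2 + 2 * c - (x + (2 * c + 1) * y))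
                by ring]
            exact my_ediv_eq hN.ne' (by linarith) (by linarith)
          rw [hx]
          exact ⟨rfl, by ring⟩
    · intro h
      rcases h with ⟨v, ⟨hv1, hv2⟩, hgv⟩ | h | h | h | h
      · obtain ⟨hgx, hgy⟩ := hgv
        subst hgx; subst hgy
        have h0 := Int.mul_ediv_add_emod (2 * c ^ 2 + 2 * c - (2 * c + 1) * v)
          (4 * c ^ 2 + 4 * c + 2)
        have hr1 := Int.emod_nonneg (2 * c ^ 2 + 2 * c - (2 * c + 1) * v) hN.ne'
        have hr2 := Int.emod_lt_of_pos (2 * c ^ 2 + 2 * c - (2 * c + 1) * v) hN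
        constructor
        · rw [abs_le]; constructor <;> nlinarith [h0, hr1, hr2]
        · rw [abs_le]; constructor <;> nlinarith [h0, hr1, hr2]
      all_goals obtain ⟨hgx, hgy⟩ := h
      all_goals rw [hgx, hgy]
      all_goals constructor <;> (rw [abs_le]; constructor <;> nlinarith [sq_nonneg (2 * c + 1)])
  have hcard : Nat.card {p : ℤ × ℤ //
      |2 * p.1 + (2 * (2 * c + 2) - 2) * p.2| ≤ (2 * c + 2) ^ 2 - 2 * (2 * c + 2) + 2 ∧
      |(2 - 2 * (2 * c + 2)) * p.1 + 2 * p.2| ≤ (2 * c + 2) ^ 2 - 2 * (2 * c + 2) + 2}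
      = F.card := by
    calc Nat.card {p : ℤ × ℤ |
        |2 * p.1 + (2 * (2 * c + 2) - 2) * p.2| ≤ (2 * c + 2) ^ 2 - 2 * (2 * c + 2) + 2 ∧
        |(2 - 2 * (2 * c + 2)) * p.1 + 2 * p.2| ≤ (2 * c + 2) ^ 2 - 2 * (2 * c + 2) + 2}
        = ({p : ℤ × ℤ |
        |2 * p.1 + (2 * (2 * c + 2) - 2) * p.2| ≤ (2 * c + 2) ^ 2 - 2 * (2 * c + 2) + 2 ∧
        |(2 - 2 * (2 * c + 2)) * p.1 + 2 * p.2| ≤ (2 * c + 2) ^ 2 - 2 * (2 * c + 2) + 2} :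
          Set (ℤ × ℤ)).ncard := Nat.card_coe_set_eq _
      _ = (↑F : Set (ℤ × ℤ)).ncard := by rw [hset]
      _ = F.card := Set.ncard_coe_finset F
  rw [hcard]
  have hdisj : Disjoint ((Finset.Icc (-(2 * c ^ 2 + 2 * c)) (2 * c ^ 2 + 2 * c)).image g) C := by
    rw [Finset.disjoint_left]
    rintro p hp hpC
    simp only [Finset.mem_image, Finset.mem_Icc, hg] at hp
    obtain ⟨v, ⟨hv1, hv2⟩, hgv⟩ := hp
    have h2 := congrArg (fun q : ℤ × ℤ => q.2 - (2 * c + 1) * q.1) hgv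
    simp only at h2
    simp only [hC, Finset.mem_insert, Finset.mem_singleton, Prod.mk.injEq] at hpC
    rcases hpC with rfl | rfl | rfl | rfl <;> simp at h2 <;> nlinarith [h2, hv1, hv2]
  have hCcard : C.card = 4 := by
    rw [hC]
    rw [Finset.card_insert_of_notMem (by simp only [Finset.mem_insert, Finset.mem_singleton, Prod.mk.injEq]; omega)]
    rw [Finset.card_insert_of_notMem (by simp only [Finset.mem_insert, Finset.mem_singleton, Prod.mk.injEq]; omega)]
    rw [Finset.card_insert_of_notMem (by simp only [Finset.mem_insert, Finset.mem_singleton, Prod.mk.injEq]; omega)]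
    rw [Finset.card_singleton]
  have hinj : Set.InjOn g ↑(Finset.Icc (-(2 * c ^ 2 + 2 * c)) (2 * c ^ 2 + 2 * c)) := by
    intro a _ b _ hab
    have h1 := congrArg Prod.fst hab
    have h2 := congrArg Prod.snd hab
    simp only [hg] at h1 h2
    rw [h1] at h2
    linarith
  rw [hF, Finset.card_union_of_disjoint hdisj, Finset.card_image_of_injOn hinj, hCcard,
    Int.card_Icc, Nat.cast_add, Int.toNat_of_nonneg (by linarith : (0:ℤ) ≤ 2 * c ^ 2 + 2 * c + 1 - -(2 * c ^ 2 + 2 * c))]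
  push_cast
  ring

/-- The "twisting square" `P_t` and its number of integer points. -/
theorem stmt_2 (t : ℕ) :
    (Odd t →
      (Nat.card {p : ℤ × ℤ //
          |2 * p.1 + (2 * (t : ℤ) - 2) * p.2| ≤ (t : ℤ) ^ 2 - 2 * t + 2 ∧
          |(2 - 2 * (t : ℤ)) * p.1 + 2 * p.2| ≤ (t : ℤ) ^ 2 - 2 * t + 2} : ℤ) =
        (t : ℤ) ^ 2 - 2 * t + 2) ∧
    (Even t →
      (Nat.card {p : ℤ × ℤ //
          |2 * p.1 + (2 * (t : ℤ) - 2) * p.2| ≤ (t : ℤ) ^ 2 - 2 * t + 2 ∧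
          |(2 - 2 * (t : ℤ)) * p.1 + 2 * p.2| ≤ (t : ℤ) ^ 2 - 2 * t + 2} : ℤ) =
        (t : ℤ) ^ 2 - 2 * t + 5) := by
  constructor
  · rintro ⟨k, hk⟩
    exact count_odd_t (t : ℤ) (k : ℤ) (by push_cast [hk]; ring)
  · rintro ⟨k, hk⟩
    exact count_even_t (t : ℤ) ((k : ℤ) - 1) (by push_cast [hk]; ring)
end

section
/- For t ≥ 2, the Frobenius number of the three integers t, t+1, t+2 equals (floor((t−2)/2) + 1)·t − 1; that is, this number is not representable as a nonnegative integer combination λ₁t + λ₂(t+1) + λ₃(t+2), while every larger integer is representable. -/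
/-- The Frobenius number of `t, t+1, t+2` is `(⌊(t-2)/2⌋ + 1)·t - 1` for `t ≥ 2`:
this number is not a nonnegative integer combination of `t, t+1, t+2`,
while every larger integer is. -/
theorem stmt_3 (t : ℕ) (ht : 2 ≤ t) :
    ¬ (∃ l₁ l₂ l₃ : ℕ, ((t - 2) / 2 + 1) * t - 1 =
        l₁ * t + l₂ * (t + 1) + l₃ * (t + 2)) ∧
    ∀ n : ℕ, ((t - 2) / 2 + 1) * t - 1 < n →
      ∃ l₁ l₂ l₃ : ℕ, n = l₁ * t + l₂ * (t + 1) + l₃ * (t + 2) := by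
  set q : ℕ := (t - 2) / 2 + 1 with hq
  have h2q : 2 * q ≤ t := by omega
  have h2q' : t ≤ 2 * q + 1 := by omega
  have ht0 : 0 < t := by omega
  constructor
  · rintro ⟨l₁, l₂, l₃, h⟩
    have key : q * t - 1 = (l₁ + l₂ + l₃) * t + (l₂ + 2 * l₃) := by rw [h]; ring
    set s : ℕ := l₁ + l₂ + l₃ with hs
    have hqt : 2 ≤ q * t := by
      calc 2 = 1 * 2 := by norm_num
      _ ≤ q * t := Nat.mul_le_mul (by omega) ht
    have hslt : s < q := by
      by_contra hc
      push_neg at hc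
      have := Nat.mul_le_mul_right t hc
      omega
    have hst : s * t + t ≤ q * t := by
      have h1 : (s + 1) * t ≤ q * t := Nat.mul_le_mul_right t hslt
      have h2 : (s + 1) * t = s * t + t := by ring
      omega
    omega
  · intro n hn
    set s : ℕ := n / t with hsdef
    set r : ℕ := n % t with hrdef
    have hdm : s * t + r = n := by rw [mul_comm]; exact Nat.div_add_mod n t
    have hrt : r < t := Nat.mod_lt n ht0
    have hqs : q ≤ s := (Nat.le_div_iff_mul_le ht0).2 (by omega)
    have hr2s : r ≤ 2 * s := by omega
    obtain ⟨b, c, hbc, hle⟩ : ∃ b c, r = b + 2 * c ∧ b + c ≤ s :=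
      ⟨r % 2, r / 2, by omega, by omega⟩
    obtain ⟨a, ha⟩ : ∃ a, s = a + (b + c) := ⟨s - (b + c), by omega⟩
    refine ⟨a, b, c, ?_⟩
    rw [← hdm, ha, hbc]; ring
end

section
/- The family S_t = {x ∈ ℤ : ∃ y, y ≥ 0 ∧ x·y = t} has cardinality equal to the number of positive divisors of t (for t ≥ 1), and this function is not an eventual quasi-polynomial in t. -/
/-- A function `g : ℕ → ℤ` is an eventual quasi-polynomial (EQP). -/
def IsEQP (g : ℕ → ℤ) : Prop :=
  ∃ (m N : ℕ) (f : ℕ → Polynomial ℚ), 0 < m ∧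
    ∀ t : ℕ, N ≤ t → ((g t : ℚ) = (f (t % m)).eval (t : ℚ))

lemma card_divisors_prime {p : ℕ} (hp : p.Prime) : p.divisors.card = 2 := by
  rw [hp.divisors, Finset.card_insert_of_notMem (by simp [hp.ne_one.symm]),
    Finset.card_singleton]

lemma card_divisors_sq {p : ℕ} (hp : p.Prime) : (p ^ 2).divisors.card = 3 := by
  rw [Nat.divisors_prime_pow hp, Finset.card_map, Finset.card_range]

/-- The family `S_t = {x ∈ ℤ : ∃ y ≥ 0, x·y = t}` has cardinality the number of
positive divisors of `t` (for `t ≥ 1`), and this function is not an EQP. -/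
theorem stmt_5 :
    (∀ t : ℕ, 1 ≤ t →
      Nat.card {x : ℤ // ∃ y : ℤ, y ≥ 0 ∧ x * y = (t : ℤ)} = t.divisors.card) ∧
    ¬ IsEQP (fun t : ℕ => (t.divisors.card : ℤ)) := by
  constructor
  · intro t ht
    have ht0 : t ≠ 0 := by omega
    have key : ∀ x : ℤ, (∃ y : ℤ, y ≥ 0 ∧ x * y = (t : ℤ)) → 0 < x := by
      rintro x ⟨y, hy, hxy⟩
      nlinarith [Int.natCast_pos.mpr (by omega : 0 < t)]
    have e : {x : ℤ // ∃ y : ℤ, y ≥ 0 ∧ x * y = (t : ℤ)} ≃ t.divisors := by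
      refine ⟨fun x => ⟨x.1.toNat, ?_⟩, fun d => ⟨(d.1 : ℤ), ?_⟩, ?_, ?_⟩
      · obtain ⟨y, hy, hxy⟩ := x.2
        have hx : 0 < x.1 := key x.1 x.2
        have hdvd : (x.1.toNat : ℤ) ∣ (t : ℤ) := by
          rw [Int.toNat_of_nonneg hx.le]; exact ⟨y, hxy.symm⟩
        exact Nat.mem_divisors.mpr ⟨Int.natCast_dvd_natCast.mp hdvd, ht0⟩
      · obtain ⟨hdvd, -⟩ := Nat.mem_divisors.mp d.2
        exact ⟨(t / d.1 : ℕ), Int.natCast_nonneg _, by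
          rw [← Nat.cast_mul, Nat.mul_div_cancel' hdvd]⟩
      · rintro ⟨x, hx⟩
        simp [Int.toNat_of_nonneg (key x hx).le]
      · rintro ⟨d, hd⟩
        simp
    rw [Nat.card_congr e, Nat.card_eq_finsetCard]
  · rintro ⟨m, N, f, hm, hf⟩
    have hT : {p : ℕ | p.Prime ∧ N ≤ p ∧ p % m = 1 % m}.Infinite := by
      apply Set.infinite_of_forall_exists_gt
      intro a
      obtain ⟨p, hp, hgt, hmod⟩ := Nat.exists_prime_gt_modEq_one (max a N) hm.ne'
      exact ⟨p, ⟨hp, le_of_lt (lt_of_le_of_lt (le_max_right _ _) hgt), hmod⟩,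
        lt_of_le_of_lt (le_max_left _ _) hgt⟩
    have hg0 : f (1 % m) - Polynomial.C 2 = 0 := by
      apply Polynomial.eq_zero_of_infinite_isRoot
      apply Set.Infinite.mono ?_ (hT.image (Set.injOn_of_injective Nat.cast_injective))
      rintro x ⟨p, ⟨hp, hNp, hpm⟩, rfl⟩
      have h2 := hf p hNp
      simp only [card_divisors_prime hp] at h2
      simp [Polynomial.IsRoot, hpm ▸ h2.symm]
    have hC : f (1 % m) = Polynomial.C 2 := by linear_combination (norm := ring_nf) hg0
    obtain ⟨p, hp, hgt, hmod⟩ := Nat.exists_prime_gt_modEq_one N hm.ne'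
    have hsq : (p ^ 2) % m = 1 % m := by
      have : p * p ≡ 1 * 1 [MOD m] := Nat.ModEq.mul hmod hmod
      simpa [pow_two, Nat.ModEq] using this
    have hNsq : N ≤ p ^ 2 := le_trans hgt.le (by nlinarith [hp.two_le])
    have h3 := hf (p ^ 2) hNsq
    simp only [card_divisors_sq hp, hsq, hC] at h3
    simp at h3
end

section
/- Let P ⊆ ℝ^d be a polyhedron of the form P = conv{x₁,...,x_q} + cone{y₁,...,y_r} + span{z₁,...,z_s}, with xᵢ ∈ ℚ^d and yⱼ, z_k ∈ ℤ^d \ {0}, and suppose r ≥ 1 or s ≥ 1. Let Q = conv{x₁,...,x_q} + zono{y₁,...,y_r, z₁,...,z_s}, where zono{w₁,...,w_u} = {λ₁w₁ + ... + λ_u w_u : 0 ≤ λᵢ ≤ 1}. Then: (a) if Q contains an integer point, then P contains infinitely many integer points; (b) if Q contains no integer point, then P contains no integer point. -/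
/-- A vector in `ℝ^d` is an integer point if all its coordinates are integers. -/
def IsIntegerPoint {d : ℕ} (v : Fin d → ℝ) : Prop := ∀ i, ∃ n : ℤ, v i = (n : ℝ)

private lemma sum_add_single {ι M : Type*} [Fintype ι] [DecidableEq ι]
    [AddCommMonoid M] [Module ℝ M] (m : ι → ℝ) (W : ι → M) (j₀ : ι) (c : ℝ) :
    ∑ j, (m j + if j = j₀ then c else 0) • W j = (∑ j, m j • W j) + c • W j₀ := by
  simp [add_smul, Finset.sum_add_distrib, ite_smul, Finset.sum_ite_eq']

/-- Zonotope lemma: with `P = conv{xᵢ} + cone{yⱼ} + span{z_k}` (with at least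
one ray or line direction) and `Q = conv{xᵢ} + zono{yⱼ, z_k}`:
(a) if `Q` contains an integer point then `P` contains infinitely many;
(b) if `Q` contains no integer point then neither does `P`. -/
theorem stmt_10 (d q r s : ℕ)
    (x : Fin q → Fin d → ℚ) (y : Fin r → Fin d → ℤ) (z : Fin s → Fin d → ℤ)
    (hy : ∀ j, y j ≠ 0) (hz : ∀ k, z k ≠ 0) (hrs : 1 ≤ r ∨ 1 ≤ s)
    (P Q : Set (Fin d → ℝ))
    (hP : P = {v | ∃ (l : Fin q → ℝ) (m : Fin r → ℝ) (n : Fin s → ℝ),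
      (∀ i, 0 ≤ l i) ∧ (∑ i, l i) = 1 ∧ (∀ j, 0 ≤ m j) ∧
      v = (∑ i, l i • fun c => ((x i c : ℝ))) + (∑ j, m j • fun c => ((y j c : ℝ)))
            + (∑ k, n k • fun c => ((z k c : ℝ)))})
    (hQ : Q = {v | ∃ (l : Fin q → ℝ) (m : Fin r → ℝ) (n : Fin s → ℝ),
      (∀ i, 0 ≤ l i) ∧ (∑ i, l i) = 1 ∧ (∀ j, 0 ≤ m j ∧ m j ≤ 1) ∧
      (∀ k, 0 ≤ n k ∧ n k ≤ 1) ∧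
      v = (∑ i, l i • fun c => ((x i c : ℝ))) + (∑ j, m j • fun c => ((y j c : ℝ)))
            + (∑ k, n k • fun c => ((z k c : ℝ)))}) :
    ((∃ v ∈ Q, IsIntegerPoint v) → {v ∈ P | IsIntegerPoint v}.Infinite) ∧
    ((¬ ∃ v ∈ Q, IsIntegerPoint v) → ¬ ∃ v ∈ P, IsIntegerPoint v) := by
  constructor
  · rintro ⟨v, hvQ, hvInt⟩
    rw [hQ] at hvQ
    obtain ⟨l, m, n, hl, hl1, hm, hn, hv⟩ := hvQ
    -- a direction `w` (a ray or a line generator) we can add arbitrarily many times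
    obtain ⟨w, hw0, hwP⟩ : ∃ w : Fin d → ℤ, w ≠ 0 ∧
        ∀ t : ℕ, (v + (t : ℝ) • fun c => ((w c : ℝ))) ∈ P := by
      rcases hrs with hr | hs
      · refine ⟨y ⟨0, hr⟩, hy _, fun t => ?_⟩
        rw [hP]
        refine ⟨l, (fun j => m j + if j = ⟨0, hr⟩ then (t : ℝ) else 0), n, hl, hl1,
          fun j => by have := (hm j).1; positivity, ?_⟩
        rw [sum_add_single, hv]
        abel
      · refine ⟨z ⟨0, hs⟩, hz _, fun t => ?_⟩
        rw [hP]
        refine ⟨l, m, (fun k => n k + if k = ⟨0, hs⟩ then (t : ℝ) else 0), hl, hl1,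
          fun j => (hm j).1, ?_⟩
        rw [sum_add_single, hv]
        abel
    apply Set.infinite_of_injective_forall_mem
      (f := fun t : ℕ => v + (t : ℝ) • fun c => ((w c : ℝ)))
    · intro t₁ t₂ h
      obtain ⟨i, hi⟩ := Function.ne_iff.mp hw0
      have h' := congrFun (add_left_cancel h) i
      simp only [Pi.smul_apply, smul_eq_mul] at h'
      have : (t₁ : ℝ) = t₂ := by
        have hwi : ((w i : ℝ)) ≠ 0 := by exact_mod_cast hi
        exact mul_right_cancel₀ hwi h'
      exact_mod_cast this
    · intro t
      refine ⟨hwP t, fun i => ?_⟩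
      obtain ⟨a, ha⟩ := hvInt i
      refine ⟨a + t * w i, ?_⟩
      simp only [Pi.add_apply, Pi.smul_apply, smul_eq_mul, ha]
      push_cast
      ring
  · intro hnQ
    rintro ⟨v, hvP, hvInt⟩
    apply hnQ
    rw [hP] at hvP
    obtain ⟨l, m, n, hl, hl1, hm, hv⟩ := hvP
    refine ⟨v - ((∑ j, (⌊m j⌋ : ℝ) • fun c => ((y j c : ℝ)))
        + ∑ k, (⌊n k⌋ : ℝ) • fun c => ((z k c : ℝ))), ?_, ?_⟩
    · rw [hQ]
      refine ⟨l, fun j => Int.fract (m j), fun k => Int.fract (n k), hl, hl1,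
        fun j => ⟨Int.fract_nonneg _, (Int.fract_lt_one _).le⟩,
        fun k => ⟨Int.fract_nonneg _, (Int.fract_lt_one _).le⟩, ?_⟩
      rw [hv]
      have hmsum : ∑ j, m j • (fun c => ((y j c : ℝ)))
          = (∑ j, (⌊m j⌋ : ℝ) • fun c => ((y j c : ℝ)))
            + ∑ j, Int.fract (m j) • (fun c => ((y j c : ℝ))) := by
        rw [← Finset.sum_add_distrib]
        refine Finset.sum_congr rfl fun j _ => ?_
        rw [← add_smul, Int.floor_add_fract]
      have hnsum : ∑ k, n k • (fun c => ((z k c : ℝ)))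
          = (∑ k, (⌊n k⌋ : ℝ) • fun c => ((z k c : ℝ)))
            + ∑ k, Int.fract (n k) • (fun c => ((z k c : ℝ))) := by
        rw [← Finset.sum_add_distrib]
        refine Finset.sum_congr rfl fun k _ => ?_
        rw [← add_smul, Int.floor_add_fract]
      rw [hmsum, hnsum]
      abel
    · intro i
      obtain ⟨a, ha⟩ := hvInt i
      refine ⟨a - ((∑ j, ⌊m j⌋ * y j i) + ∑ k, ⌊n k⌋ * z k i), ?_⟩
      simp only [Pi.sub_apply, Pi.add_apply, Finset.sum_apply, Pi.smul_apply,
        smul_eq_mul, ha]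
      push_cast
      ring
end
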